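/- Let A be a ℂ-algebra with the lifting property for algebra morphisms modulo nilpotent ideals (quasi-free/formally smooth): for every ℂ-algebra B with nilpotent two-sided ideal I ⊆ B and every algebra map f : A → B/I, there exists an algebra map g : A → B lifting f. Then for any n, the matrix algebra M_n(A) also has this lifting property. -/

import Mathlib

open Finset

set_option linter.unusedSectionVars false
set_option maxHeartbeats 1000000

section Helpers

variable {B C : Type} [Ring B] [Algebra ℂ B] [Ring C] [Algebra ℂ C]


def DD (x : B) : Subalgebra ℂ B :=
  Subalgebra.centralizer ℂ ((Subalgebra.centralizer ℂ {x} : Subalgebra ℂ B) : Set B)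

lemma mem_DD_self (x : B) : x ∈ DD x := by
  rw [DD, Subalgebra.mem_centralizer_iff]
  intro z hz
  rw [SetLike.mem_coe, Subalgebra.mem_centralizer_iff] at hz
  exact (hz x rfl).symm

lemma DD_comm (x : B) (a b : DD x) : a * b = b * a := by
  have hbZ : (b : B) ∈ Subalgebra.centralizer ℂ ({x} : Set B) := by
    rw [Subalgebra.mem_centralizer_iff]
    rintro z rfl
    exact (Subalgebra.mem_centralizer_iff ℂ).mp b.2 z (by
      rw [SetLike.mem_coe, Subalgebra.mem_centralizer_iff]; rintro w rfl; rfl)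
  have := (Subalgebra.mem_centralizer_iff ℂ).mp a.2 (b : B) (SetLike.mem_coe.mpr hbZ)
  exact Subtype.ext this.symm

noncomputable instance (x : B) : CommRing (DD x) :=
  { (inferInstance : Ring (DD x)) with mul_comm := DD_comm x }

lemma absorb_left {P a : B} (hP : P * P = P) (ha : P * a * P = a) : P * a = a := by
  conv_lhs => rw [← ha]
  rw [← mul_assoc, ← mul_assoc, hP]
  exact ha

lemma absorb_right {P a : B} (hP : P * P = P) (ha : P * a * P = a) : a * P = a := by
  conv_lhs => rw [← ha]
  rw [mul_assoc, hP]
  exact ha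

lemma absorb_mul {P a b : B} (hP : P * P = P) (ha : P * a * P = a) (hb : P * b * P = b) :
    P * (a * b) * P = a * b := by
  have h1 : P * (a * b) * P = (P * a) * (b * P) := by
    rw [← mul_assoc]; rw [mul_assoc (P * a)]
  rw [h1, absorb_left hP ha, absorb_right hP hb]

lemma lift_idem (π : B →ₐ[ℂ] C) (M : ℕ) (hnil : ∀ b : B, π b = 0 → b ^ M = 0)
    (x P : B) (he : π x * π x = π x) (hP : P * P = P) (hx : P * x * P = x) :
    ∃ p : B, p * p = p ∧ π p = π x ∧ P * p * P = p := by
  set xd : DD x := ⟨x, mem_DD_self x⟩ with hxd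
  have newton : ∀ k : ℕ, ∃ y w : DD x,
      y * y - y = (xd * xd - xd) ^ (2 ^ k) * w ∧ π (y : B) = π x ∧ P * (y : B) * P = (y : B) := by
    intro k
    induction k with
    | zero =>
      exact ⟨xd, 1, by ring, rfl, hx⟩
    | succ k ih =>
      obtain ⟨y, w, hdef, hπ, hPy⟩ := ih
      refine ⟨y*y + (y*y + y*y) - (y*y*y + y*y*y),
        w * w * ((y*y + y*y + y*y + y*y) - (y + y + y + y) - (1+1+1)), ?_, ?_, ?_⟩
      · have key : (y*y + (y*y + y*y) - (y*y*y + y*y*y)) * (y*y + (y*y + y*y) - (y*y*y + y*y*y))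
            - (y*y + (y*y + y*y) - (y*y*y + y*y*y))
            = (y*y - y) * (y*y - y) * ((y*y + y*y + y*y + y*y) - (y + y + y + y) - (1+1+1)) := by
          ring
        rw [key, hdef, pow_succ]
        ring
      · have hcast : ((y*y + (y*y + y*y) - (y*y*y + y*y*y) : DD x) : B)
            = (y:B)*(y:B) + ((y:B)*(y:B) + (y:B)*(y:B)) - ((y:B)*(y:B)*(y:B) + (y:B)*(y:B)*(y:B)) := by
          push_cast; rfl
        rw [hcast]
        simp only [map_sub, map_add, map_mul, hπ, he]
        abel
      · have hcast : ((y*y + (y*y + y*y) - (y*y*y + y*y*y) : DD x) : B)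
            = (y:B)*(y:B) + ((y:B)*(y:B) + (y:B)*(y:B)) - ((y:B)*(y:B)*(y:B) + (y:B)*(y:B)*(y:B)) := by
          push_cast; rfl
        rw [hcast]
        have h2 : P * ((y:B) * (y:B)) * P = (y:B) * (y:B) := absorb_mul hP hPy hPy
        have h3 : P * ((y:B) * (y:B) * (y:B)) * P = (y:B) * (y:B) * (y:B) := absorb_mul hP h2 hPy
        simp only [mul_add, add_mul, mul_sub, sub_mul, h2, h3]
  obtain ⟨K, hK⟩ : ∃ K, M ≤ 2 ^ K := ⟨M, le_of_lt (Nat.lt_two_pow_self)⟩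
  obtain ⟨y, w, hdef, hπ, hPy⟩ := newton K
  refine ⟨(y : B), ?_, hπ, hPy⟩
  have hker : π ((x*x - x : B)) = 0 := by
    simp only [map_sub, map_mul, he, sub_self]
  have hxM : ((x*x - x : B)) ^ M = 0 := hnil _ hker
  have hcoe : ((xd * xd - xd : DD x) : B) = x*x - x := by push_cast; rfl
  have hzero : ((xd * xd - xd) ^ (2 ^ K) : DD x) = 0 := by
    have : ((((xd * xd - xd) ^ (2 ^ K)) : DD x) : B) = 0 := by
      push_cast [hcoe]
      rw [← Nat.sub_add_cancel hK, pow_add, hxM, mul_zero]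
    exact Subtype.ext this
  have : y * y - y = 0 := by rw [hdef, hzero, zero_mul]
  have : ((y*y - y : DD x) : B) = 0 := by rw [this]; rfl
  have hyy : (y:B) * (y:B) - (y:B) = 0 := by push_cast at this; exact this
  exact sub_eq_zero.mp hyy

lemma lift_orth (π : B →ₐ[ℂ] C) (hsurj : Function.Surjective π) (M : ℕ)
    (hnil : ∀ b : B, π b = 0 → b ^ M = 0) :
    ∀ (k : ℕ) (u : Fin k → C), (∀ i, u i * u i = u i) → (∀ i j, i ≠ j → u i * u j = 0) →
    ∃ p : Fin k → B, (∀ i, p i * p i = p i) ∧ (∀ i j, i ≠ j → p i * p j = 0) ∧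
      (∀ i, π (p i) = u i) := by
  intro k
  induction k with
  | zero =>
    intro u _ _
    exact ⟨Fin.elim0, fun i => i.elim0, fun i => i.elim0, fun i => i.elim0⟩
  | succ k ih =>
    intro u hu1 hu2
    obtain ⟨p', h1, h2, h3⟩ := ih (fun i => u i.castSucc) (fun i => hu1 _)
      (fun i j hij => hu2 _ _ (fun h => hij (Fin.castSucc_injective k h)))
    set S : B := ∑ i, p' i with hSdef
    have hpS : ∀ i, p' i * S = p' i := by
      intro i
      rw [hSdef, Finset.mul_sum]
      rw [Finset.sum_eq_single i (fun j _ hj => h2 i j (Ne.symm hj)) (by simp)]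
      exact h1 i
    have hSp : ∀ i, S * p' i = p' i := by
      intro i
      rw [hSdef, Finset.sum_mul]
      rw [Finset.sum_eq_single i (fun j _ hj => h2 j i hj) (by simp)]
      exact h1 i
    have hS : S * S = S := by
      rw [hSdef, Finset.sum_mul]
      exact Finset.sum_congr rfl fun i _ => hpS i
    set P : B := 1 - S with hPdef
    have hP : P * P = P := by
      rw [hPdef, sub_mul, one_mul, mul_sub, mul_one, hS]
      abel
    have hpP : ∀ i, p' i * P = 0 := by
      intro i; rw [hPdef, mul_sub, mul_one, hpS, sub_self]
    have hPp : ∀ i, P * p' i = 0 := by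
      intro i; rw [hPdef, sub_mul, one_mul, hSp i, sub_self]
    obtain ⟨b, hb⟩ := hsurj (u (Fin.last k))
    set x : B := P * b * P with hxdef
    have hxP : P * x * P = x := by
      rw [hxdef, ← mul_assoc, ← mul_assoc, hP, mul_assoc (P*b), hP]
    have hπP : π P = 1 - ∑ i : Fin k, u i.castSucc := by
      rw [hPdef, map_sub, map_one, hSdef, map_sum]
      congr 1
      exact Finset.sum_congr rfl fun i _ => h3 i
    have hulast : ∀ i : Fin k, u i.castSucc * u (Fin.last k) = 0 :=
      fun i => hu2 _ _ (Fin.castSucc_lt_last i).ne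
    have hlastu : ∀ i : Fin k, u (Fin.last k) * u i.castSucc = 0 :=
      fun i => hu2 _ _ (Fin.castSucc_lt_last i).ne'
    have hπx : π x = u (Fin.last k) := by
      rw [hxdef, map_mul, map_mul, hb, hπP]
      rw [sub_mul, one_mul, Finset.sum_mul]
      rw [Finset.sum_congr rfl fun i _ => hulast i, Finset.sum_const_zero, sub_zero]
      rw [mul_sub, mul_one, Finset.mul_sum]
      rw [Finset.sum_congr rfl fun i _ => hlastu i, Finset.sum_const_zero, sub_zero]
    have he : π x * π x = π x := by rw [hπx]; exact hu1 _
    obtain ⟨q, hq1, hq2, hq3⟩ := lift_idem π M hnil x P he hP hxP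
    have hqP : q * P = q := absorb_right hP hq3
    have hPq : P * q = q := absorb_left hP hq3
    have hpq : ∀ i, p' i * q = 0 := by
      intro i; rw [← hPq, ← mul_assoc, hpP i, zero_mul]
    have hqp : ∀ i, q * p' i = 0 := by
      intro i; rw [← hqP, mul_assoc, hPp i, mul_zero]
    refine ⟨Fin.snoc p' q, ?_, ?_, ?_⟩
    · intro i
      induction i using Fin.lastCases with
      | last => simpa [Fin.snoc_last] using hq1
      | cast i => simpa [Fin.snoc_castSucc] using h1 i
    · intro i j hij
      induction i using Fin.lastCases with
      | last =>
        induction j using Fin.lastCases with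
        | last => exact absurd rfl hij
        | cast j => simpa [Fin.snoc_last, Fin.snoc_castSucc] using hqp j
      | cast i =>
        induction j using Fin.lastCases with
        | last => simpa [Fin.snoc_last, Fin.snoc_castSucc] using hpq i
        | cast j =>
          simp only [Fin.snoc_castSucc]
          exact h2 i j (fun h => hij (by rw [h]))
    · intro i
      induction i using Fin.lastCases with
      | last => rw [Fin.snoc_last]; rw [hq2, hπx]
      | cast i => rw [Fin.snoc_castSucc]; exact h3 i

lemma idem_nil {M : ℕ} (hM : 1 ≤ M) {q : B} (hq : q * q = q) (h : q ^ M = 0) : q = 0 := by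
  obtain ⟨m, rfl⟩ := Nat.exists_eq_add_of_le hM
  have h2 : q ^ (m + 1) = q := IsIdempotentElem.pow_succ_eq m hq
  rw [add_comm] at h
  rw [← h2, h]

lemma lift_units (π : B →ₐ[ℂ] C) (hsurj : Function.Surjective π) (M : ℕ) (hM : 1 ≤ M)
    (hnil : ∀ b : B, π b = 0 → b ^ M = 0) (n : ℕ) (hn : 0 < n) (u : Fin n → Fin n → C)
    (humul : ∀ i j k l, u i j * u k l = if j = k then u i l else 0)
    (huone : ∑ i, u i i = 1) :
    ∃ ε : Fin n → Fin n → B, (∀ i j, π (ε i j) = u i j) ∧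
      (∀ i j k l, j ≠ k → ε i j * ε k l = 0) ∧
      (∀ i j l, ε i j * ε j l = ε i l) ∧ (∑ i, ε i i = 1) := by
  set z : Fin n := ⟨0, hn⟩ with hzdef
  obtain ⟨p, hp1, hp2, hp3⟩ := lift_orth π hsurj M hnil n (fun i => u i i)
    (fun i => by simpa using humul i i i i)
    (fun i j hij => by simpa [hij] using humul i i j j)
  -- sum of p is 1
  have hpS : ∀ i, p i * ∑ j, p j = p i := by
    intro i
    rw [Finset.mul_sum, Finset.sum_eq_single i (fun j _ hj => hp2 i j (Ne.symm hj)) (by simp)]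
    exact hp1 i
  have hSS : (∑ i, p i) * ∑ j, p j = ∑ j, p j := by
    rw [Finset.sum_mul]
    exact Finset.sum_congr rfl fun i _ => hpS i
  have hsum : ∑ i, p i = 1 := by
    have hq : (1 - ∑ i, p i) * (1 - ∑ i, p i) = 1 - ∑ i, p i := by
      rw [sub_mul, one_mul, mul_sub, mul_one, hSS]
      abel
    have hπq : π (1 - ∑ i, p i) = 0 := by
      rw [map_sub, map_one, map_sum]
      rw [Finset.sum_congr rfl fun i _ => hp3 i, huone, sub_self]
    have := idem_nil hM hq (hnil _ hπq)
    rw [sub_eq_zero] at this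
    exact this.symm
  -- choose preimages
  choose b hb using fun i => hsurj (u z i)
  choose c hc using fun i => hsurj (u i z)
  set v : Fin n → B := fun i => p z * b i * p i with hvdef
  set w : Fin n → B := fun i => p i * c i * p z with hwdef
  have hv_l : ∀ i, p z * v i = v i := by
    intro i
    show p z * (p z * b i * p i) = p z * b i * p i
    rw [← mul_assoc, ← mul_assoc, hp1 z]
  have hv_r : ∀ i, v i * p i = v i := by
    intro i
    show p z * b i * p i * p i = p z * b i * p i
    rw [mul_assoc, hp1 i]
  have hw_l : ∀ i, p i * w i = w i := by
    intro i
    show p i * (p i * c i * p z) = p i * c i * p z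
    rw [← mul_assoc, ← mul_assoc, hp1 i]
  have hw_r : ∀ i, w i * p z = w i := by
    intro i
    show p i * c i * p z * p z = p i * c i * p z
    rw [mul_assoc, hp1 z]
  have hπv : ∀ i, π (v i) = u z i := by
    intro i
    show π (p z * b i * p i) = u z i
    rw [map_mul, map_mul, hp3, hp3, hb]
    rw [humul, if_pos rfl, humul, if_pos rfl]
  have hπw : ∀ i, π (w i) = u i z := by
    intro i
    show π (p i * c i * p z) = u i z
    rw [map_mul, map_mul, hp3, hp3, hc]
    rw [humul, if_pos rfl, humul, if_pos rfl]
  have hvw0 : ∀ j k, j ≠ k → v j * w k = 0 := by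
    intro j k hjk
    rw [← hv_r j, ← hw_l k, mul_assoc (v j), ← mul_assoc (p j), hp2 j k hjk,
      zero_mul, mul_zero]
  set d : Fin n → B := fun i => v i * w i with hddef
  have hd_l : ∀ i, p z * d i = d i := by
    intro i
    show p z * (v i * w i) = v i * w i
    rw [← mul_assoc, hv_l]
  have hd_r : ∀ i, d i * p z = d i := by
    intro i
    show v i * w i * p z = v i * w i
    rw [mul_assoc, hw_r]
  have hπd : ∀ i, π (d i) = u z z := by
    intro i
    show π (v i * w i) = u z z
    rw [map_mul, hπv, hπw, humul, if_pos rfl]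
  set r : Fin n → B := fun i => p z - d i with hrdef
  have hπr : ∀ i, π (r i) = 0 := by
    intro i
    show π (p z - d i) = 0
    rw [map_sub, hπd, hp3, sub_self]
  have hr_l : ∀ i, p z * r i = r i := by
    intro i
    show p z * (p z - d i) = p z - d i
    rw [mul_sub, hp1 z, hd_l]
  have hr_r : ∀ i, r i * p z = r i := by
    intro i
    show (p z - d i) * p z = p z - d i
    rw [sub_mul, hp1 z, hd_r]
  have hrpow_l : ∀ i m, p z * r i ^ (m + 1) = r i ^ (m + 1) := by
    intro i m
    rw [pow_succ', ← mul_assoc, hr_l]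
  have hrpow_r : ∀ i m, r i ^ (m + 1) * p z = r i ^ (m + 1) := by
    intro i m
    rw [pow_succ, mul_assoc, hr_r]
  set t : Fin n → B := fun i => ∑ j ∈ Finset.range M, r i ^ j * p z with htdef
  have hπt : ∀ i, π (t i) = u z z := by
    intro i
    show π (∑ j ∈ Finset.range M, r i ^ j * p z) = u z z
    rw [map_sum]
    rw [Finset.sum_eq_single 0 (fun j _ hj => by
      rw [map_mul, map_pow, hπr, zero_pow hj, zero_mul])
      (fun h => absurd (Finset.mem_range.mpr hM) h)]
    rw [map_mul, map_pow, hπr, pow_zero, one_mul, hp3]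
  have ht_r : ∀ i, t i * p z = t i := by
    intro i
    show (∑ j ∈ Finset.range M, r i ^ j * p z) * p z = ∑ j ∈ Finset.range M, r i ^ j * p z
    rw [Finset.sum_mul]
    exact Finset.sum_congr rfl fun j _ => by rw [mul_assoc, hp1 z]
  have hdt : ∀ i, d i * t i = p z := by
    intro i
    have hd_eq : d i = p z - r i := by
      show d i = p z - (p z - d i)
      rw [sub_sub_cancel]
    rw [hd_eq]
    show (p z - r i) * ∑ j ∈ Finset.range M, r i ^ j * p z = p z
    rw [Finset.mul_sum]
    have hterm : ∀ j, (p z - r i) * (r i ^ j * p z) = r i ^ j * p z - r i ^ (j+1) * p z := by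
      intro j
      rw [sub_mul]
      congr 1
      · cases j with
        | zero => rw [pow_zero, one_mul, hp1 z]
        | succ m => rw [← mul_assoc, hrpow_l]
      · rw [← mul_assoc, ← pow_succ']
    rw [Finset.sum_congr rfl fun j _ => hterm j]
    rw [Finset.sum_range_sub' (fun j => r i ^ j * p z) M]
    rw [pow_zero, one_mul, hnil _ (hπr i), zero_mul, sub_zero]
  set ε : Fin n → Fin n → B := fun i j => w i * t i * v j with hεdef
  have hπε : ∀ i j, π (ε i j) = u i j := by
    intro i j
    show π (w i * t i * v j) = u i j
    rw [map_mul, map_mul, hπw, hπt, hπv]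
    rw [humul, if_pos rfl, humul, if_pos rfl]
  have hmul0 : ∀ i j k l, j ≠ k → ε i j * ε k l = 0 := by
    intro i j k l hjk
    show w i * t i * v j * (w k * t k * v l) = 0
    simp only [mul_assoc]
    rw [← mul_assoc (v j) (w k), hvw0 j k hjk, zero_mul, mul_zero, mul_zero]
  have hmul1 : ∀ i j l, ε i j * ε j l = ε i l := by
    intro i j l
    show w i * t i * v j * (w j * t j * v l) = w i * t i * v l
    simp only [mul_assoc]
    rw [← mul_assoc (v j) (w j), ← mul_assoc (v j * w j) (t j)]
    show w i * (t i * (d j * t j * v l)) = w i * (t i * v l)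
    rw [hdt, hv_l]
  have hdiag : ∀ i, ε i i = p i := by
    intro i
    have hq_idem : ε i i * ε i i = ε i i := hmul1 i i i
    have hπq : π (ε i i) = π (p i) := by rw [hπε, hp3]
    have hpq_l : p i * ε i i = ε i i := by
      show p i * (w i * t i * v i) = w i * t i * v i
      rw [← mul_assoc (p i) (w i * t i) (v i), ← mul_assoc (p i) (w i) (t i), hw_l]
    have hpq_r : ε i i * p i = ε i i := by
      show w i * t i * v i * p i = w i * t i * v i
      rw [mul_assoc (w i * t i), hv_r]
    have hs_idem : (p i - ε i i) * (p i - ε i i) = p i - ε i i := by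
      rw [sub_mul, mul_sub, mul_sub, hp1 i, hpq_l, hpq_r, hq_idem]
      abel
    have hπs : π (p i - ε i i) = 0 := by rw [map_sub, hπq, sub_self]
    have := idem_nil hM hs_idem (hnil _ hπs)
    rw [sub_eq_zero] at this
    exact this.symm
  refine ⟨ε, hπε, hmul0, hmul1, ?_⟩
  rw [Finset.sum_congr rfl fun i _ => hdiag i, hsum]

end Helpers

open Matrix in
/-- if a ℂ-algebra A is quasi-free (formally smooth), i.e. has the lifting
property for algebra morphisms modulo nilpotent ideals — presented via surjections
π : B → C of ℂ-algebras with nilpotent kernel — then so does the matrix algebra Mₙ(A). -/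
theorem matrix_algebra_formally_smooth (A : Type) [Ring A] [Algebra ℂ A]
    (hA : ∀ (B C : Type) [Ring B] [Algebra ℂ B] [Ring C] [Algebra ℂ C] (π : B →ₐ[ℂ] C),
      Function.Surjective π →
      (∃ m : ℕ, ∀ x : Fin m → B, (∀ i, π (x i) = 0) → (List.ofFn x).prod = 0) →
      ∀ f : A →ₐ[ℂ] C, ∃ g : A →ₐ[ℂ] B, π.comp g = f)
    (n : ℕ) :
    ∀ (B C : Type) [Ring B] [Algebra ℂ B] [Ring C] [Algebra ℂ C] (π : B →ₐ[ℂ] C),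
      Function.Surjective π →
      (∃ m : ℕ, ∀ x : Fin m → B, (∀ i, π (x i) = 0) → (List.ofFn x).prod = 0) →
      ∀ f : Matrix (Fin n) (Fin n) A →ₐ[ℂ] C,
        ∃ g : Matrix (Fin n) (Fin n) A →ₐ[ℂ] B, π.comp g = f := by
  intro B C _ _ _ _ π hsurj hker f
  obtain ⟨m, hm⟩ := hker
  set M := m + 1 with hMdef
  have hM1 : 1 ≤ M := Nat.le_add_left 1 m
  have hMprod : ∀ x : Fin M → B, (∀ i, π (x i) = 0) → (List.ofFn x).prod = 0 := by
    intro x hx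
    rw [List.ofFn_succ, List.prod_cons]
    rw [hm (fun i => x i.succ) (fun i => hx i.succ), mul_zero]
  have hnil : ∀ b : B, π b = 0 → b ^ M = 0 := by
    intro b hb
    have := hMprod (fun _ => b) (fun _ => hb)
    rwa [List.ofFn_const, List.prod_replicate] at this
  rcases Nat.eq_zero_or_pos n with rfl | hn
  · -- trivial case: 0 × 0 matrices
    have h1M : (1 : Matrix (Fin 0) (Fin 0) A) = 0 := by
      ext i j; exact i.elim0
    have h1C : (1 : C) = 0 := by
      rw [← _root_.map_one f, h1M, map_zero]
    have h1B : (1 : B) = 0 := by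
      have := hnil 1 (by rw [_root_.map_one, h1C])
      rwa [one_pow] at this
    have hallB : ∀ b : B, b = 0 := fun b => by rw [← mul_one b, h1B, mul_zero]
    have hallC : ∀ c : C, c = 0 := fun c => by rw [← mul_one c, h1C, mul_zero]
    have g0 : Matrix (Fin 0) (Fin 0) A →ₐ[ℂ] B :=
      { toFun := fun _ => 0
        map_one' := h1B.symm
        map_mul' := fun x y => (mul_zero 0).symm
        map_zero' := rfl
        map_add' := fun x y => (add_zero 0).symm
        commutes' := fun zc => (hallB _).symm }
    refine ⟨g0, ?_⟩
    apply AlgHom.ext; intro x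
    exact (hallC _).trans (hallC _).symm
  -- main case
  set z : Fin n := ⟨0, hn⟩ with hz
  set u : Fin n → Fin n → C := fun i j => f (Matrix.single i j (1 : A)) with hu
  have humul : ∀ i j k l, u i j * u k l = if j = k then u i l else 0 := by
    intro i j k l
    by_cases h : j = k
    · subst h
      rw [if_pos rfl, hu, ← _root_.map_mul, Matrix.single_mul_single_same, one_mul]
    · rw [if_neg h, hu, ← _root_.map_mul, Matrix.single_mul_single_of_ne (h := h), map_zero]
  have hstdsum : ∑ i : Fin n, Matrix.single i i (1 : A) = 1 := by
    ext a b
    simp only [Matrix.sum_apply, Matrix.single, Matrix.of_apply, Matrix.one_apply]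
    by_cases hab : a = b
    · subst hab
      simp
    · rw [if_neg hab]
      exact Finset.sum_eq_zero fun i _ => if_neg (by rintro ⟨rfl, rfl⟩; exact hab rfl)
  have huone : ∑ i, u i i = 1 := by
    rw [hu, ← map_sum, hstdsum, _root_.map_one]
  obtain ⟨ε, hπε, hε0, hε1, hεsum⟩ := lift_units π hsurj M hM1 hnil n hn u humul huone
  -- the centralizer subalgebras
  set B₀ : Subalgebra ℂ B :=
    Subalgebra.centralizer ℂ (Set.range fun q : Fin n × Fin n => ε q.1 q.2) with hB₀
  set C₀ : Subalgebra ℂ C :=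
    Subalgebra.centralizer ℂ (Set.range fun q : Fin n × Fin n => u q.1 q.2) with hC₀
  have hmemB₀ : ∀ (x : B), (∀ i j, ε i j * x = x * ε i j) → x ∈ B₀ := by
    intro x hx
    rw [hB₀, Subalgebra.mem_centralizer_iff]
    rintro g ⟨q, rfl⟩
    exact hx q.1 q.2
  have hB₀comm : ∀ (x : B₀) i j, ε i j * (x : B) = (x : B) * ε i j := by
    intro x i j
    exact (Subalgebra.mem_centralizer_iff ℂ).mp x.2 (ε i j) ⟨(i, j), rfl⟩
  have hπmem : ∀ x : B₀, π (x : B) ∈ C₀ := by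
    intro x
    rw [hC₀, Subalgebra.mem_centralizer_iff]
    rintro g ⟨q, rfl⟩
    show u q.1 q.2 * π (x : B) = π (x : B) * u q.1 q.2
    rw [← hπε, ← _root_.map_mul, hB₀comm x q.1 q.2, _root_.map_mul]
  set π' : B₀ →ₐ[ℂ] C₀ := (π.comp B₀.val).codRestrict C₀ hπmem with hπ'
  have hπ'apply : ∀ x : B₀, (π' x : C) = π (x : B) := fun x => rfl
  -- surjectivity of π'
  have hsurj' : Function.Surjective π' := by
    intro c
    obtain ⟨b0, hb0⟩ := hsurj (c : C)
    set b' : B := ∑ k, ε k z * b0 * ε z k with hb'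
    have hb'mem : b' ∈ B₀ := by
      apply hmemB₀
      intro i j
      rw [hb', Finset.mul_sum, Finset.sum_mul]
      rw [Finset.sum_eq_single j (fun k _ hk => by
        rw [← mul_assoc, ← mul_assoc, hε0 i j k z hk.symm, zero_mul, zero_mul])
        (by simp)]
      rw [Finset.sum_eq_single i (fun k _ hk => by
        rw [mul_assoc, mul_assoc, hε0 z k i j hk, mul_zero, mul_zero])
        (by simp)]
      rw [← mul_assoc, ← mul_assoc, hε1 i j z, mul_assoc (ε i z * b0), hε1 z i j]
    refine ⟨⟨b', hb'mem⟩, ?_⟩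
    apply Subtype.ext
    show π b' = (c : C)
    have hcu : ∀ k l, u k l * (c : C) = (c : C) * u k l := fun k l =>
      (Subalgebra.mem_centralizer_iff ℂ).mp c.2 (u k l) ⟨(k, l), rfl⟩
    have hterm : ∀ k, π (ε k z * b0 * ε z k) = (c : C) * u k k := by
      intro k
      rw [_root_.map_mul, _root_.map_mul, hπε, hπε, hb0]
      rw [hcu k z, mul_assoc, humul k z z k, if_pos rfl]
    rw [hb', map_sum, Finset.sum_congr rfl fun k _ => hterm k, ← Finset.mul_sum, huone,
      mul_one]
  -- nilpotency for the restricted map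
  have hker' : ∃ m' : ℕ, ∀ x : Fin m' → B₀, (∀ i, π' (x i) = 0) → (List.ofFn x).prod = 0 := by
    refine ⟨M, fun x hx => ?_⟩
    apply Subtype.ext
    have hcoe : ((List.ofFn x).prod : B) = (List.ofFn fun i => (x i : B)).prod := by
      have h1 := map_list_prod (B₀.val) (List.ofFn x)
      rw [List.map_ofFn] at h1
      exact h1
    rw [hcoe, ZeroMemClass.coe_zero]
    apply hMprod
    intro i
    have hxi : ((π' (x i) : C₀) : C) = ((0 : C₀) : C) := congrArg _ (hx i)
    rw [hπ'apply, ZeroMemClass.coe_zero] at hxi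
    exact hxi
  -- the diagonal embedding composed with f, landing in C₀
  have hdiagcomm : ∀ (a : A) (i j : Fin n),
      Matrix.single i j (1 : A) * Matrix.diagonal (fun _ => a)
        = Matrix.diagonal (fun _ => a) * Matrix.single i j (1 : A) := by
    intro a i j
    ext k l
    rw [Matrix.mul_diagonal, Matrix.diagonal_mul]
    simp [Matrix.single, ite_mul, mul_ite]
  have hdiagmem : ∀ a : A, f (Matrix.diagonal fun _ => a) ∈ C₀ := by
    intro a
    rw [hC₀, Subalgebra.mem_centralizer_iff]
    rintro gg ⟨q, rfl⟩
    show u q.1 q.2 * f (Matrix.diagonal fun _ => a) = f (Matrix.diagonal fun _ => a) * u q.1 q.2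
    rw [hu, ← _root_.map_mul, ← _root_.map_mul, hdiagcomm]
  let lam : A →ₐ[ℂ] C₀ :=
    { toFun := fun a => ⟨f (Matrix.diagonal fun _ => a), hdiagmem a⟩
      map_one' := Subtype.ext (by
        show f (Matrix.diagonal fun _ => (1:A)) = 1
        rw [show (Matrix.diagonal fun _ => (1:A)) = 1 from Matrix.diagonal_one, _root_.map_one])
      map_mul' := fun a b => Subtype.ext (by
        show f (Matrix.diagonal fun _ => a * b) = f (Matrix.diagonal fun _ => a) * f (Matrix.diagonal fun _ => b)
        rw [← _root_.map_mul, Matrix.diagonal_mul_diagonal])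
      map_zero' := Subtype.ext (by
        show f (Matrix.diagonal fun _ => (0:A)) = 0
        rw [show (Matrix.diagonal fun _ => (0:A)) = 0 from Matrix.diagonal_zero, map_zero])
      map_add' := fun a b => Subtype.ext (by
        show f (Matrix.diagonal fun _ => a + b) = f (Matrix.diagonal fun _ => a) + f (Matrix.diagonal fun _ => b)
        rw [← map_add, Matrix.diagonal_add])
      commutes' := fun zc => Subtype.ext (by
        show f (Matrix.diagonal fun _ => algebraMap ℂ A zc) = ((algebraMap ℂ C₀ zc : C₀) : C)
        rw [Subalgebra.coe_algebraMap]
        rw [show (Matrix.diagonal fun _ => algebraMap ℂ A zc)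
            = algebraMap ℂ (Matrix (Fin n) (Fin n) A) zc from ?_, f.commutes]
        · rw [Matrix.algebraMap_eq_diagonal]
          rfl) }
  have hlam : ∀ a, ((lam a : C₀) : C) = f (Matrix.diagonal fun _ => a) := fun a => rfl
  -- apply the lifting property of A
  obtain ⟨g₀, hg₀⟩ := hA B₀ C₀ π' hsurj' hker' lam
  have hg : ∀ a : A, π ((g₀ a : B₀) : B) = f (Matrix.diagonal fun _ => a) := by
    intro a
    have h1 : π' (g₀ a) = lam a := AlgHom.congr_fun hg₀ a
    have h2 := congrArg Subtype.val h1
    rw [hπ'apply] at h2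
    rw [h2]
    exact hlam a
  have hcomm : ∀ (a : A) (i j : Fin n),
      ε i j * ((g₀ a : B₀) : B) = ((g₀ a : B₀) : B) * ε i j := fun a i j => hB₀comm (g₀ a) i j
  have hds : ∀ (a : A) (i j : Fin n),
      Matrix.diagonal (fun _ => a) * Matrix.single i j (1 : A) = Matrix.single i j a := by
    intro a i j
    ext k l
    rw [Matrix.diagonal_mul]
    simp [Matrix.single, mul_ite]
  -- the lifted algebra morphism
  have hGone : (∑ i, ∑ j, ((g₀ ((1 : Matrix (Fin n) (Fin n) A) i j) : B₀) : B) * ε i j) = 1 := by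
    rw [← hεsum]
    refine Finset.sum_congr rfl fun i _ => ?_
    rw [Finset.sum_eq_single i (fun j _ hj => by
        rw [Matrix.one_apply_ne (Ne.symm hj), map_zero, ZeroMemClass.coe_zero, zero_mul])
      (fun h => absurd (Finset.mem_univ i) h)]
    rw [Matrix.one_apply_eq, _root_.map_one, OneMemClass.coe_one, one_mul]
  have hGzero : (∑ i : Fin n, ∑ j, ((g₀ ((0 : Matrix (Fin n) (Fin n) A) i j) : B₀) : B) * ε i j) = 0 := by
    refine Finset.sum_eq_zero fun i _ => Finset.sum_eq_zero fun j _ => ?_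
    rw [Matrix.zero_apply, map_zero, ZeroMemClass.coe_zero, zero_mul]
  have hGadd : ∀ X Y : Matrix (Fin n) (Fin n) A,
      (∑ i, ∑ j, ((g₀ ((X + Y) i j) : B₀) : B) * ε i j)
        = (∑ i, ∑ j, ((g₀ (X i j) : B₀) : B) * ε i j)
          + (∑ i, ∑ j, ((g₀ (Y i j) : B₀) : B) * ε i j) := by
    intro X Y
    rw [← Finset.sum_add_distrib]
    refine Finset.sum_congr rfl fun i _ => ?_
    rw [← Finset.sum_add_distrib]
    refine Finset.sum_congr rfl fun j _ => ?_
    rw [Matrix.add_apply, map_add, Subalgebra.coe_add, add_mul]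
  have hT : ∀ (a b : A) (i k l j : Fin n),
      (((g₀ a : B₀) : B) * ε i k) * (((g₀ b : B₀) : B) * ε l j)
        = (((g₀ a : B₀) : B) * ((g₀ b : B₀) : B)) * (ε i k * ε l j) := by
    intro a b i k l j
    rw [mul_assoc ((g₀ a : B₀) : B) (ε i k), ← mul_assoc (ε i k), hcomm b i k,
      mul_assoc ((g₀ b : B₀) : B) (ε i k), ← mul_assoc]
  have hGmul : ∀ X Y : Matrix (Fin n) (Fin n) A,
      (∑ i, ∑ j, ((g₀ ((X * Y) i j) : B₀) : B) * ε i j)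
        = (∑ i, ∑ j, ((g₀ (X i j) : B₀) : B) * ε i j)
          * (∑ i, ∑ j, ((g₀ (Y i j) : B₀) : B) * ε i j) := by
    intro X Y
    have step1 : (∑ i, ∑ k, ((g₀ (X i k) : B₀) : B) * ε i k)
          * (∑ l, ∑ j, ((g₀ (Y l j) : B₀) : B) * ε l j)
        = ∑ i, ∑ k, ∑ l, ∑ j,
            (((g₀ (X i k) : B₀) : B) * ε i k) * (((g₀ (Y l j) : B₀) : B) * ε l j) := by
      rw [Finset.sum_mul_sum]
      refine Finset.sum_congr rfl fun i _ => ?_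
      rw [Finset.sum_congr rfl fun l (_ : l ∈ Finset.univ) =>
        Finset.sum_mul_sum Finset.univ Finset.univ
          (fun k => ((g₀ (X i k) : B₀) : B) * ε i k)
          (fun j => ((g₀ (Y l j) : B₀) : B) * ε l j)]
      exact Finset.sum_comm
    have step2 : ∀ i k, (∑ l, ∑ j,
            (((g₀ (X i k) : B₀) : B) * ε i k) * (((g₀ (Y l j) : B₀) : B) * ε l j))
        = ∑ j, (((g₀ (X i k) : B₀) : B) * ((g₀ (Y k j) : B₀) : B)) * ε i j := by
      intro i k
      rw [Finset.sum_eq_single k (fun l _ hl => Finset.sum_eq_zero fun j _ => by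
          rw [hT, hε0 i k l j (Ne.symm hl), mul_zero])
        (fun h => absurd (Finset.mem_univ k) h)]
      refine Finset.sum_congr rfl fun j _ => ?_
      rw [hT, hε1 i k j]
    have step3 : (∑ i, ∑ j, ((g₀ ((X * Y) i j) : B₀) : B) * ε i j)
        = ∑ i, ∑ k, ∑ j, (((g₀ (X i k) : B₀) : B) * ((g₀ (Y k j) : B₀) : B)) * ε i j := by
      refine Finset.sum_congr rfl fun i _ => ?_
      rw [Finset.sum_congr rfl fun j (_ : j ∈ Finset.univ) => show
          ((g₀ ((X * Y) i j) : B₀) : B) * ε i j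
            = ∑ k, (((g₀ (X i k) : B₀) : B) * ((g₀ (Y k j) : B₀) : B)) * ε i j from by
        rw [Matrix.mul_apply, map_sum g₀, AddSubmonoidClass.coe_finset_sum, Finset.sum_mul]
        refine Finset.sum_congr rfl fun k _ => ?_
        rw [_root_.map_mul, Subalgebra.coe_mul]]
      exact Finset.sum_comm
    rw [step3, step1]
    exact Finset.sum_congr rfl fun i _ => Finset.sum_congr rfl fun k _ => (step2 i k).symm
  have hGalg : ∀ zc : ℂ,
      (∑ i, ∑ j, ((g₀ ((algebraMap ℂ (Matrix (Fin n) (Fin n) A) zc) i j) : B₀) : B) * ε i j)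
        = algebraMap ℂ B zc := by
    intro zc
    have hterm : ∀ i : Fin n,
        (∑ j, ((g₀ ((algebraMap ℂ (Matrix (Fin n) (Fin n) A) zc) i j) : B₀) : B) * ε i j)
          = algebraMap ℂ B zc * ε i i := by
      intro i
      rw [Finset.sum_eq_single i (fun j _ hj => by
          rw [Matrix.algebraMap_matrix_apply, if_neg (fun h => hj h.symm), map_zero,
            ZeroMemClass.coe_zero, zero_mul])
        (fun h => absurd (Finset.mem_univ i) h)]
      rw [Matrix.algebraMap_matrix_apply, if_pos rfl, AlgHom.commutes,
        Subalgebra.coe_algebraMap]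
    rw [Finset.sum_congr rfl fun i _ => hterm i, ← Finset.mul_sum, hεsum, mul_one]
  let g : Matrix (Fin n) (Fin n) A →ₐ[ℂ] B :=
    { toFun := fun X => ∑ i, ∑ j, ((g₀ (X i j) : B₀) : B) * ε i j
      map_one' := hGone
      map_mul' := hGmul
      map_zero' := hGzero
      map_add' := hGadd
      commutes' := hGalg }
  refine ⟨g, ?_⟩
  apply AlgHom.ext
  intro X
  show π (∑ i, ∑ j, ((g₀ (X i j) : B₀) : B) * ε i j) = f X
  rw [map_sum]
  rw [Finset.sum_congr rfl fun i (_ : i ∈ Finset.univ) => map_sum π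
    (fun j => ((g₀ (X i j) : B₀) : B) * ε i j) Finset.univ]
  rw [Finset.sum_congr rfl fun i (_ : i ∈ Finset.univ) => Finset.sum_congr rfl
    fun j (_ : j ∈ Finset.univ) => show π (((g₀ (X i j) : B₀) : B) * ε i j)
      = f (Matrix.single i j (X i j)) from by
    rw [_root_.map_mul, hg, hπε, hu, ← _root_.map_mul, hds]]
  rw [← Finset.sum_congr rfl fun i (_ : i ∈ Finset.univ) => map_sum f
    (fun j => Matrix.single i j (X i j)) Finset.univ]
  rw [← map_sum]
  rw [← Matrix.matrix_eq_sum_single X]
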